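/- Fix λ ≥ 1, let R = 2^λ and M = R/2, and write each complex symbol as s_m = x_{2m} + √−1 · x_{2m+1} with real variables x_0, ..., x_{2R−1}, so that S(s) = Σ_{r=0}^{2R−1} x_r B_r for uniquely determined weight matrices B_r ∈ M_R(ℂ). Partition the 2R real variables into the four groups G_1 = {x_{2m} : 0 ≤ m < M}, G_2 = {x_{2m+1} : 0 ≤ m < M}, G_3 = {x_{2m} : M ≤ m < R}, G_4 = {x_{2m+1} : M ≤ m < R}. Then B_rᴴ B_t + B_tᴴ B_r = 0 whenever x_r and x_t belong to different groups. Hence the design from the extended Clifford algebra A_2^{2^{λ−1}} is four-group decodable. -/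

import Mathlib

open Matrix

namespace DDSTC

/-- Index type `{0, ..., M-1}` with `M = 2^(λ-1)` (so `R = 2^λ = 2*M`,
and `R×R` matrices are indexed by `Idx lam ⊕ Idx lam`). -/
abbrev Idx (lam : ℕ) := Fin (2 ^ (lam - 1))

/-- Bitwise XOR `⊕` on `{0, ..., 2^(λ-1) - 1}`. -/
def fx {lam : ℕ} (i j : Idx lam) : Idx lam :=
  ⟨i.val ^^^ j.val, Nat.xor_lt_two_pow i.isLt j.isLt⟩

/-- The matrix `P_k ∈ M_M(ℂ)`, with `(P_k)_{ij} = 1` if `j = i ⊕ k` and `0` otherwise. -/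
def P {lam : ℕ} (k : Idx lam) : Matrix (Idx lam) (Idx lam) ℂ :=
  Matrix.of fun i j => if j = fx i k then 1 else 0

/-- The `R×R` design matrix `S(s) = [[C(s), -conj(D(s))], [D(s), conj(C(s))]]`
where `C(s)_{ij} = s_{i⊕j}` and `D(s)_{ij} = s_{M+(i⊕j)}`. -/
def Sdes {lam : ℕ} (s : Idx lam ⊕ Idx lam → ℂ) :
    Matrix (Idx lam ⊕ Idx lam) (Idx lam ⊕ Idx lam) ℂ :=
  Matrix.fromBlocks
    (Matrix.of fun i j => s (Sum.inl (fx i j)))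
    (-(Matrix.of fun i j => starRingEnd ℂ (s (Sum.inr (fx i j)))))
    (Matrix.of fun i j => s (Sum.inr (fx i j)))
    (Matrix.of fun i j => starRingEnd ℂ (s (Sum.inl (fx i j))))

/-- The relay matrices: `A_k = [[P_k, 0], [0, P_k]]` for `0 ≤ k < M` (index `Sum.inl k`)
and `A_{M+k} = [[0, -P_k], [P_k, 0]]` for `0 ≤ k < M` (index `Sum.inr k`). -/
def Arel {lam : ℕ} : Idx lam ⊕ Idx lam → Matrix (Idx lam ⊕ Idx lam) (Idx lam ⊕ Idx lam) ℂ
  | Sum.inl k => Matrix.fromBlocks (P k) 0 0 (P k)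
  | Sum.inr k => Matrix.fromBlocks 0 (-(P k)) (P k) 0

/-- Real-variable index: `(m, false)` is the real part `x_{2m}` and `(m, true)` the
imaginary part `x_{2m+1}` of the complex symbol `s_m`. -/
abbrev RIdx (lam : ℕ) := (Idx lam ⊕ Idx lam) × Bool

/-- The real coordinates of `s`: `coord s (m, false) = Re(s_m)`,
`coord s (m, true) = Im(s_m)`. -/
def coord {lam : ℕ} (s : Idx lam ⊕ Idx lam → ℂ) : RIdx lam → ℝ
  | (m, false) => (s m).re
  | (m, true) => (s m).im

/-- The weight matrix of the real variable indexed by `r`: `B_{2m} = S(e_m)` and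
`B_{2m+1} = S(√-1 · e_m)`. -/
def wB {lam : ℕ} (r : RIdx lam) : Matrix (Idx lam ⊕ Idx lam) (Idx lam ⊕ Idx lam) ℂ :=
  Sdes fun i => if i = r.1 then (if r.2 then Complex.I else 1) else 0

/-- The four groups: `G_1` = real parts of the first `M` symbols, `G_2` = their imaginary
parts, `G_3` = real parts of the last `M` symbols, `G_4` = their imaginary parts. -/
def grp4 {lam : ℕ} : RIdx lam → Fin 4
  | (Sum.inl _, false) => 0
  | (Sum.inl _, true) => 1
  | (Sum.inr _, false) => 2
  | (Sum.inr _, true) => 3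


lemma fx_fx {lam : ℕ} (i j : Idx lam) : fx i (fx i j) = j := by
  simp [fx, ← Nat.xor_assoc]

lemma fx_eq_iff {lam : ℕ} (i j m : Idx lam) : fx i j = m ↔ j = fx i m := by
  constructor
  · rintro rfl; rw [fx_fx]
  · rintro rfl; rw [fx_fx]

lemma fx_comm {lam : ℕ} (i j : Idx lam) : fx i j = fx j i := by
  simp [fx, Nat.xor_comm]

lemma P_herm {lam : ℕ} (k : Idx lam) : (P k)ᴴ = P k := by
  ext i j
  simp only [P, conjTranspose_apply, of_apply]
  have h : i = fx j k ↔ j = fx i k := by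
    rw [← fx_eq_iff j i k, ← fx_eq_iff i j k, fx_comm]
  by_cases hc : j = fx i k
  · rw [if_pos (h.mpr hc), if_pos hc]; simp
  · rw [if_neg (fun hh => hc (h.mp hh)), if_neg hc]; simp

lemma P_mul {lam : ℕ} (k l : Idx lam) : P k * P l = P (fx k l) := by
  ext i j
  simp only [P, mul_apply, of_apply]
  rw [Finset.sum_eq_single (fx i k)]
  · simp only [if_pos rfl, one_mul]
    simp [fx, Nat.xor_assoc, eq_comm]
    split_ifs <;> simp_all
  · intro b _ hb
    rw [if_neg (by exact fun h => hb (by rw [h])), zero_mul]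
  · simp

def cb (b : Bool) : ℂ := if b then Complex.I else 1

lemma wB_inl {lam : ℕ} (k : Idx lam) (b : Bool) :
    wB (Sum.inl k, b) =
      Matrix.fromBlocks (cb b • P k) 0 0 (starRingEnd ℂ (cb b) • P k) := by
  cases b <;> ext i j <;> cases i <;> cases j <;>
    simp [wB, Sdes, P, cb, fx_eq_iff, mul_ite, Matrix.smul_apply,
      apply_ite (starRingEnd ℂ), apply_ite Neg.neg (α := ℂ)]

lemma wB_inr {lam : ℕ} (k : Idx lam) (b : Bool) :
    wB (Sum.inr k, b) =
      Matrix.fromBlocks 0 ((-(starRingEnd ℂ (cb b))) • P k) (cb b • P k) 0 := by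
  cases b <;> ext i j <;> cases i <;> cases j <;>
    simp [wB, Sdes, P, cb, fx_eq_iff, mul_ite, Matrix.smul_apply,
      apply_ite (starRingEnd ℂ), apply_ite Neg.neg (α := ℂ)]

lemma key {lam : ℕ} : ∀ r t : RIdx lam, grp4 r ≠ grp4 t →
    (wB r)ᴴ * wB t + (wB t)ᴴ * wB r = 0 := by
  rintro ⟨m, b⟩ ⟨m', b'⟩ h
  rcases m with k | k <;> rcases m' with l | l <;> rcases b with _|_ <;> rcases b' with _|_ <;>
    (try (exfalso; exact h rfl)) <;>
    simp [wB_inl, wB_inr, cb, Matrix.fromBlocks_conjTranspose,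
      Matrix.conjTranspose_smul, P_herm, Matrix.fromBlocks_multiply,
      Matrix.fromBlocks_add, Matrix.smul_mul, Matrix.mul_smul, smul_smul,
      P_mul, fx_comm, Complex.conj_I, ← Matrix.fromBlocks_zero, ← add_smul]

lemma part1 {lam : ℕ} (s : Idx lam ⊕ Idx lam → ℂ) :
    Sdes s = ∑ r : RIdx lam, (coord s r : ℂ) • wB r := by
  ext i j
  rw [Matrix.sum_apply]
  rw [Fintype.sum_prod_type]
  cases i <;> cases j <;>
    simp [Sdes, wB, coord, mul_ite, Finset.sum_add_distrib,
      Finset.sum_ite_eq, Complex.ext_iff,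
      apply_ite Complex.re, apply_ite Complex.im]

/-- writing `s_m = x_{2m} + √-1 x_{2m+1}`, the design decomposes as
`S(s) = Σ_r x_r B_r` for the weight matrices `B_r`, and `B_rᴴ B_t + B_tᴴ B_r = 0`
whenever `x_r` and `x_t` lie in different groups of the four-group partition; hence the
design from the extended Clifford algebra is four-group decodable. -/
theorem stmt14 (lam : ℕ) (hlam : 1 ≤ lam) :
    (∀ s : Idx lam ⊕ Idx lam → ℂ,
      Sdes s = ∑ r : RIdx lam, (coord s r : ℂ) • wB r) ∧
    (∀ r t : RIdx lam, grp4 r ≠ grp4 t →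
      (wB r)ᴴ * wB t + (wB t)ᴴ * wB r = 0) := by
  exact ⟨part1, key⟩
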